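/- The spread polynomials form a strong divisibility sequence: for all m, n ≥ 1, in ℚ[X] the greatest common divisor of Z_m and Z_n is associated to Z_{gcd(m,n)}. In particular, if m divides n then Z_m divides Z_n in ℤ[X]. -/

import Mathlib

open Polynomial

/-- Lucas-type polynomials: `l 0 = 2`, `l 1 = X`, `l n = X * l (n-1) - l (n-2)`. -/
noncomputable def lucPoly : ℕ → ℤ[X]
  | 0 => 2
  | 1 => X
  | (n + 2) => X * lucPoly (n + 1) - lucPoly n

/-- Herbig's variant of the spread polynomials: `Z n = 2 - lₙ(2 - X)`. -/
noncomputable def Zpoly (n : ℕ) : ℤ[X] := 2 - (lucPoly n).comp (2 - X)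

lemma lucPoly_add_two (n : ℕ) : lucPoly (n+2) = X * lucPoly (n+1) - lucPoly n := rfl

lemma luc_key : ∀ (b a : ℕ), lucPoly (a + 2*b) + lucPoly a = lucPoly (a+b) * lucPoly b := by
  intro b
  induction b using Nat.strong_induction_on with
  | _ b ih =>
    match b with
    | 0 => intro a; simp [lucPoly]; ring
    | 1 => intro a
           have h := lucPoly_add_two a
           rw [show a + 2*1 = a + 2 by ring, h]
           show _ = lucPoly (a+1) * lucPoly 1
           rw [show lucPoly 1 = X from rfl]; ring
    | (b+2) =>
      intro a
      have h1 := ih (b+1) (by omega) (a+1)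
      have h0 := ih b (by omega) (a+2)
      rw [show a+1 + 2*(b+1) = (a + 2*b + 1) + 2 by ring] at h1
      rw [show a+2 + 2*b = (a + 2*b) + 2 by ring] at h0
      rw [show a+1+(b+1) = a+b+2 by ring] at h1
      rw [show a+2+b = a+b+2 by ring] at h0
      rw [show a + 2*(b+2) = (a + 2*b + 2) + 2 by ring, show a + (b+2) = a + b + 2 by ring]
      rw [lucPoly_add_two (a + 2*b + 2), lucPoly_add_two b]
      rw [lucPoly_add_two (a+2*b+1)] at *
      rw [lucPoly_add_two (a+2*b)] at *
      rw [lucPoly_add_two a] at *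
      linear_combination X * h1 - h0

lemma luc_two_mul (b : ℕ) : lucPoly (2*b) = lucPoly b ^ 2 - 2 := by
  have h := luc_key b 0
  rw [zero_add, zero_add, show lucPoly 0 = 2 from rfl] at h
  linear_combination h

lemma luc_key2 (b a : ℕ) : lucPoly (a+2*b) * lucPoly a = lucPoly (a+b)^2 + lucPoly b^2 - 4 := by
  have h := luc_key a (2*b)
  rw [show 2*b + 2*a = 2*(a+b) by ring, show 2*b + a = a + 2*b by ring] at h
  rw [luc_two_mul (a+b), luc_two_mul b] at h
  linear_combination -h

noncomputable def wluc (n : ℕ) : ℤ[X] := (lucPoly n).comp (2 - X)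

lemma wluc_key (b a : ℕ) : wluc (a + 2*b) + wluc a = wluc (a+b) * wluc b := by
  have h := congrArg (fun p : ℤ[X] => p.comp (2 - X)) (luc_key b a)
  simpa [wluc, add_comp, mul_comp] using h

lemma wluc_key2 (b a : ℕ) : wluc (a+2*b) * wluc a = wluc (a+b)^2 + wluc b^2 - 4 := by
  have h := congrArg (fun p : ℤ[X] => p.comp (2 - X)) (luc_key2 b a)
  simpa [wluc, add_comp, mul_comp, sub_comp, pow_comp] using h

lemma Zpoly_eq (n : ℕ) : Zpoly n = 2 - wluc n := rfl

lemma Z_add (a b : ℕ) :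
    Zpoly (a+2*b) + Zpoly a = 2*Zpoly (a+b) + 2*Zpoly b - Zpoly (a+b) * Zpoly b := by
  simp only [Zpoly_eq]
  linear_combination - wluc_key b a

lemma Z_mul (a b : ℕ) :
    Zpoly (a+2*b) * Zpoly a = (Zpoly (a+b) - Zpoly b)^2 := by
  simp only [Zpoly_eq]
  linear_combination (-2 : ℤ[X]) * wluc_key b a + wluc_key2 b a

lemma Zpoly_zero : Zpoly 0 = 0 := by
  simp [Zpoly, show lucPoly 0 = 2 from rfl]

lemma luc_eval (n : ℕ) : (2:ℤ) ≤ (lucPoly n).eval 3 ∧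
    (lucPoly n).eval 3 < (lucPoly (n+1)).eval 3 := by
  induction n using Nat.strong_induction_on with
  | _ n ih =>
    match n with
    | 0 => simp [lucPoly]
    | 1 => simp [show lucPoly 1 = X from rfl, show lucPoly 2 = X * lucPoly 1 - lucPoly 0 from rfl,
            lucPoly]
    | (n+2) =>
      have h0 := ih n (by omega)
      have h1 := ih (n+1) (by omega)
      have e2 : (lucPoly (n+2)).eval 3 = 3 * (lucPoly (n+1)).eval 3 - (lucPoly n).eval 3 := by
        rw [show lucPoly (n+2) = X * lucPoly (n+1) - lucPoly n from rfl]; simp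
      have e3 : (lucPoly (n+3)).eval 3 = 3 * (lucPoly (n+2)).eval 3 - (lucPoly (n+1)).eval 3 := by
        rw [show lucPoly (n+3) = X * lucPoly (n+2) - lucPoly (n+1) from rfl]; simp
      simp only [show n+1+1 = n+2 from rfl, show n+2+1 = n+3 from rfl] at *
      constructor <;> omega

lemma luc_eval_ge (n : ℕ) (hn : 1 ≤ n) : (3:ℤ) ≤ (lucPoly n).eval 3 := by
  induction n with
  | zero => omega
  | succ n ih =>
    cases n with
    | zero => simp [show lucPoly 1 = X from rfl]
    | succ k =>
      have h := (luc_eval (k+1)).2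
      have h2 := ih (by omega)
      omega

lemma Zpoly_eval (n : ℕ) : (Zpoly n).eval (-1) = 2 - (lucPoly n).eval 3 := by
  simp [Zpoly, eval_comp]

lemma Zpoly_ne_zero (n : ℕ) (hn : 1 ≤ n) : Zpoly n ≠ 0 := by
  intro h
  have h1 := Zpoly_eval n
  rw [h, eval_zero] at h1
  have h2 := luc_eval_ge n hn
  omega

/-- `Z g ∣ Z (g*k)`. -/
lemma Zpoly_dvd_mul (g : ℕ) : ∀ k, Zpoly g ∣ Zpoly (g * k) := by
  intro k
  induction k using Nat.strong_induction_on with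
  | _ k ih =>
    match k with
    | 0 => rw [Nat.mul_zero, Zpoly_zero]; exact dvd_zero _
    | 1 => rw [Nat.mul_one]
    | (k+2) =>
      have h1 := ih (k+1) (by omega)
      have h0 := ih k (by omega)
      have hA := Z_add (g*k) g
      rw [show g*k + 2*g = g*(k+2) by ring, show g*k + g = g*(k+1) by ring] at hA
      have : Zpoly (g*(k+2)) =
          2*Zpoly (g*(k+1)) + 2*Zpoly g - Zpoly (g*(k+1)) * Zpoly g - Zpoly (g*k) := by
        linear_combination hA
      rw [this]
      exact dvd_sub (dvd_sub (dvd_add (h1.mul_left 2) (dvd_mul_left _ 2))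
        (h1.mul_right _)) h0

lemma Zpoly_dvd_of_dvd {m n : ℕ} (h : m ∣ n) : Zpoly m ∣ Zpoly n := by
  obtain ⟨k, rfl⟩ := h
  exact Zpoly_dvd_mul m k

/-! ### The rational side -/

noncomputable def fQ (n : ℕ) : ℚ[X] := (Zpoly n).map (Int.castRingHom ℚ)

lemma fQ_ne_zero (n : ℕ) (hn : 1 ≤ n) : fQ n ≠ 0 := by
  intro h
  exact Zpoly_ne_zero n hn (Polynomial.map_injective (Int.castRingHom ℚ)
    (Int.cast_injective) (by rw [Polynomial.map_zero]; exact h))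

lemma fQ_dvd {m n : ℕ} (h : m ∣ n) : fQ m ∣ fQ n :=
  Polynomial.map_dvd _ (Zpoly_dvd_of_dvd h)

lemma fQ_add (a b : ℕ) :
    fQ (a+2*b) + fQ a = 2*fQ (a+b) + 2*fQ b - fQ (a+b) * fQ b := by
  have h := congrArg (Polynomial.map (Int.castRingHom ℚ)) (Z_add a b)
  simpa [fQ, Polynomial.map_add, Polynomial.map_mul, Polynomial.map_sub,
    Polynomial.map_ofNat] using h

lemma fQ_mul (a b : ℕ) :
    fQ (a+2*b) * fQ a = (fQ (a+b) - fQ b)^2 := by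
  have h := congrArg (Polynomial.map (Int.castRingHom ℚ)) (Z_mul a b)
  simpa [fQ, Polynomial.map_add, Polynomial.map_mul, Polynomial.map_sub,
    Polynomial.map_pow] using h

lemma sq_val_lemma {p s : ℚ[X]} (hp : Prime p) (k : ℕ)
    (h1 : ¬ p^(k+1) ∣ s) (h2 : p^(2*k+1) ∣ s * s) : False := by
  rw [pow_dvd_iff_le_emultiplicity] at h1 h2
  rw [emultiplicity_mul hp] at h2
  have he : emultiplicity p s ≤ (k : ℕ∞) := by
    rcases le_or_gt (emultiplicity p s) k with h | h
    · exact h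
    · exact absurd (Order.add_one_le_of_lt h) (by exact_mod_cast h1)
  have h3 : ((2*k+1 : ℕ) : ℕ∞) ≤ (k : ℕ∞) + (k : ℕ∞) := le_trans h2 (add_le_add he he)
  rw [← Nat.cast_add] at h3
  have h4 := Nat.cast_le.mp (h3 : ((2*k+1:ℕ):ℕ∞) ≤ ((k+k:ℕ):ℕ∞))
  omega

/-- Core Euclid step, assuming `n < m`. -/
lemma fQ_gcd_core (m n : ℕ) (hn : 1 ≤ n) (hnm : n < m)
    (IH : ∀ m' n', m' + n' < m + n → 1 ≤ m' → 1 ≤ n' →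
      Associated (gcd (fQ m') (fQ n')) (fQ (Nat.gcd m' n'))) :
    Associated (gcd (fQ m) (fQ n)) (fQ (Nat.gcd m n)) := by
  by_cases hdvd : n ∣ m
  · rw [Nat.gcd_eq_right hdvd]
    exact associated_of_dvd_dvd (gcd_dvd_right _ _) (dvd_gcd (fQ_dvd hdvd) dvd_rfl)
  set a := m - n with ha
  have ha1 : 1 ≤ a := by omega
  have ham : a + n = m := by omega
  have hm2n : m ≠ 2*n := fun h => hdvd ⟨2, by omega⟩
  have hga : Nat.gcd a n = Nat.gcd m n := by
    conv_rhs => rw [show m = a + n by omega]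
    rw [Nat.gcd_add_self_left]
  -- obtain c with the identities and gcd facts
  obtain ⟨c, hc1, hcm, hA, hB, hgc⟩ :
      ∃ c, 1 ≤ c ∧ c < m ∧
        (fQ m + fQ c = 2 * fQ a + 2 * fQ n - fQ a * fQ n) ∧
        (fQ m * fQ c = (fQ a - fQ n)^2) ∧
        Nat.gcd c n = Nat.gcd m n := by
    rcases le_or_gt (2*n) m with h2n | h2n
    · refine ⟨m - 2*n, by omega, by omega, ?_, ?_, ?_⟩
      · have := fQ_add (m - 2*n) n
        rw [show m - 2*n + 2*n = m by omega, show m - 2*n + n = a by omega] at this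
        exact this
      · have := fQ_mul (m - 2*n) n
        rw [show m - 2*n + 2*n = m by omega, show m - 2*n + n = a by omega] at this
        exact this
      · conv_rhs => rw [show m = ((m - 2*n) + n) + n by omega]
        rw [Nat.gcd_add_self_left, Nat.gcd_add_self_left]
    · refine ⟨2*n - m, by omega, by omega, ?_, ?_, ?_⟩
      · have := fQ_add (2*n - m) a
        rw [show 2*n - m + 2*a = m by omega, show 2*n - m + a = n by omega] at this
        linear_combination this
      · have := fQ_mul (2*n - m) a
        rw [show 2*n - m + 2*a = m by omega, show 2*n - m + a = n by omega] at this
        linear_combination this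
      · have e1 := Nat.gcd_add_self_right (2*n-m) a
        rw [show a + (2*n-m) = n by omega] at e1
        have e2 := Nat.gcd_add_self_right a (2*n-m)
        rw [show (2*n-m) + a = n by omega] at e2
        calc Nat.gcd (2*n-m) n = Nat.gcd (2*n-m) a := e1
          _ = Nat.gcd a (2*n-m) := Nat.gcd_comm _ _
          _ = Nat.gcd a n := e2.symm
          _ = Nat.gcd m n := hga
  have hg1 : 1 ≤ Nat.gcd m n := Nat.gcd_pos_of_pos_right m hn
  have hfgm : fQ (Nat.gcd m n) ∣ fQ m := fQ_dvd (Nat.gcd_dvd_left m n)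
  have hfgn : fQ (Nat.gcd m n) ∣ fQ n := fQ_dvd (Nat.gcd_dvd_right m n)
  have hfgD : fQ (Nat.gcd m n) ∣ gcd (fQ m) (fQ n) := dvd_gcd hfgm hfgn
  refine associated_of_dvd_dvd ?_ hfgD
  by_contra hnd
  obtain ⟨E, hE⟩ := hfgD
  have hEnu : ¬ IsUnit E := by
    intro hu
    exact hnd (hE ▸ (hu.mul_right_dvd.mpr dvd_rfl))
  have hD0 : gcd (fQ m) (fQ n) ≠ 0 := by
    intro h
    exact fQ_ne_zero m (by omega) ((gcd_eq_zero_iff _ _).mp h).1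
  have hE0 : E ≠ 0 := by rintro rfl; rw [mul_zero] at hE; exact hD0 hE
  obtain ⟨p, hpirr, hpE⟩ := WfDvdMonoid.exists_irreducible_factor hEnu hE0
  have hp : Prime p := UniqueFactorizationMonoid.irreducible_iff_prime.mp hpirr
  have hfin : FiniteMultiplicity p (fQ (Nat.gcd m n)) :=
    FiniteMultiplicity.of_prime_left hp (fQ_ne_zero _ hg1)
  obtain ⟨k0, hk0, hk0'⟩ : ∃ k0, p ^ k0 ∣ fQ (Nat.gcd m n) ∧ ¬ p ^ (k0+1) ∣ fQ (Nat.gcd m n) :=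
      ⟨multiplicity p (fQ (Nat.gcd m n)), pow_multiplicity_dvd p _,
        hfin.not_pow_dvd_of_multiplicity_lt (by omega)⟩
  have hDdvd : p ^ (k0+1) ∣ gcd (fQ m) (fQ n) := by
    rw [hE, pow_succ]
    exact mul_dvd_mul hk0 hpE
  have hm1 : p ^ (k0+1) ∣ fQ m := hDdvd.trans (gcd_dvd_left _ _)
  have hn1 : p ^ (k0+1) ∣ fQ n := hDdvd.trans (gcd_dvd_right _ _)
  have Ha : Associated (gcd (fQ a) (fQ n)) (fQ (Nat.gcd m n)) := by
    have h := IH a n (by omega) ha1 hn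
    rwa [hga] at h
  have Hc : Associated (gcd (fQ c) (fQ n)) (fQ (Nat.gcd m n)) := by
    have h := IH c n (by omega) hc1 hn
    rwa [hgc] at h
  have hpa : ¬ p ^ (k0+1) ∣ fQ a := by
    intro h
    exact hk0' ((dvd_gcd h hn1).trans Ha.dvd)
  have hgcddvd : Nat.gcd m n ∣ c := by
    rw [← hgc]; exact Nat.gcd_dvd_left c n
  have hgadvd : Nat.gcd m n ∣ a := by
    rw [← hga]; exact Nat.gcd_dvd_left a n
  have hk0c : p ^ k0 ∣ fQ c := hk0.trans (fQ_dvd hgcddvd)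
  have hs1 : ¬ p ^ (k0+1) ∣ (fQ a - fQ n) := by
    intro h
    have := dvd_add h hn1
    rw [sub_add_cancel] at this
    exact hpa this
  have hsk : p ^ (2*k0+1) ∣ (fQ a - fQ n) * (fQ a - fQ n) := by
    have : p ^ (k0+1) * p ^ k0 ∣ fQ m * fQ c := mul_dvd_mul hm1 hk0c
    rw [← pow_add] at this
    rw [show (2*k0+1) = (k0+1) + k0 by omega]
    rw [← sq]
    rw [← hB]
    exact this
  exact sq_val_lemma hp k0 hs1 hsk

/-- gcd theorem by strong induction. -/
lemma fQ_gcd (s : ℕ) : ∀ m n, m + n ≤ s → 1 ≤ m → 1 ≤ n →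
    Associated (gcd (fQ m) (fQ n)) (fQ (Nat.gcd m n)) := by
  induction s with
  | zero => intro m n h hm hn; omega
  | succ s ih =>
    intro m n h hm hn
    rcases Nat.lt_trichotomy m n with hlt | heq | hgt
    · rw [gcd_comm, Nat.gcd_comm]
      exact fQ_gcd_core n m hm hlt (fun m' n' h' hm' hn' => ih m' n' (by omega) hm' hn')
    · subst heq
      rw [Nat.gcd_self]
      exact associated_of_dvd_dvd (gcd_dvd_left _ _) (dvd_gcd dvd_rfl dvd_rfl)
    · exact fQ_gcd_core m n hn hgt (fun m' n' h' hm' hn' => ih m' n' (by omega) hm' hn')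

theorem Zpoly_strong_divisibility (m n : ℕ) (hm : 1 ≤ m) (hn : 1 ≤ n) :
    Associated
      (gcd ((Zpoly m).map (Int.castRingHom ℚ)) ((Zpoly n).map (Int.castRingHom ℚ)))
      ((Zpoly (Nat.gcd m n)).map (Int.castRingHom ℚ)) ∧
    (m ∣ n → Zpoly m ∣ Zpoly n) := by
  exact ⟨fQ_gcd (m+n) m n le_rfl hm hn, fun h => Zpoly_dvd_of_dvd h⟩
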